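/- arXiv:1806.07191 — 3 statements merged into one kernel-verified Lean document; each statement's English description precedes it below -/
import Mathlib

section
/- For every integer n > 1, the number of edges of the independent graph I_G(Z_n) equals (n² − Σ_{d ∣ n} φ(d)²)/2, where the sum ranges over the positive divisors d of n and φ is the Euler totient function. -/
open SimpleGraph

/-- The independent graph of `ZMod n`: two distinct vertices are adjacent iff
their additive orders differ. -/
def indepGraph (n : ℕ) : SimpleGraph (ZMod n) where
  Adj a b := addOrderOf a ≠ addOrderOf b
  symm := ⟨fun _ _ h => h.symm⟩
  loopless := ⟨fun _ h => h rfl⟩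

noncomputable instance (n : ℕ) : DecidableRel (indepGraph n).Adj :=
  fun a b => inferInstanceAs (Decidable (addOrderOf a ≠ addOrderOf b))

/-- The number of edges of the independent graph. -/
theorem stmt_6 (n : ℕ) [NeZero n] (hn : 1 < n) :
    (indepGraph n).edgeFinset.card
      = (n ^ 2 - ∑ d ∈ n.divisors, Nat.totient d ^ 2) / 2 := by
  classical
  have hcard : Fintype.card (ZMod n) = n := ZMod.card n
  have hEq : (Finset.univ.filter
        fun p : ZMod n × ZMod n => addOrderOf p.1 = addOrderOf p.2).card
      = ∑ d ∈ n.divisors, Nat.totient d ^ 2 := by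
    rw [Finset.card_eq_sum_card_fiberwise
      (f := fun p : ZMod n × ZMod n => addOrderOf p.1) (t := n.divisors)
      (fun p _ => Nat.mem_divisors.2 ⟨by simpa [hcard] using (addOrderOf_dvd_card : addOrderOf p.1 ∣ Fintype.card (ZMod n)), NeZero.ne n⟩)]
    refine Finset.sum_congr rfl fun d hd => ?_
    have hdvd : d ∣ Fintype.card (ZMod n) := by rw [hcard]; exact (Nat.mem_divisors.1 hd).1
    have hfib : ((Finset.univ.filter
          fun p : ZMod n × ZMod n => addOrderOf p.1 = addOrderOf p.2).filter
          fun p => addOrderOf p.1 = d)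
        = (Finset.univ.filter fun a : ZMod n => addOrderOf a = d) ×ˢ
          (Finset.univ.filter fun a : ZMod n => addOrderOf a = d) := by
      ext p
      simp only [Finset.mem_filter, Finset.mem_product, Finset.mem_univ, true_and,
        Finset.filter_filter]
      constructor
      · rintro ⟨h1, h2⟩; exact ⟨h2, h2 ▸ h1.symm⟩
      · rintro ⟨h1, h2⟩; exact ⟨h1.trans h2.symm, h1⟩
    rw [hfib, Finset.card_product,
      IsAddCyclic.card_addOrderOf_eq_totient (α := ZMod n) hdvd, sq]
  have hsplit := Finset.card_filter_add_card_filter_not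
    (s := (Finset.univ : Finset (ZMod n × ZMod n)))
    (p := fun p => addOrderOf p.1 = addOrderOf p.2)
  have huniv : (Finset.univ : Finset (ZMod n × ZMod n)).card = n ^ 2 := by
    simp [Finset.card_univ, hcard, sq]
  have h2E : 2 * (indepGraph n).edgeFinset.card
      = n ^ 2 - ∑ d ∈ n.divisors, Nat.totient d ^ 2 := by
    rw [SimpleGraph.two_mul_card_edgeFinset]
    have : (Finset.univ.filter fun (x : ZMod n × ZMod n) => (indepGraph n).Adj x.1 x.2).card
        = (Finset.univ.filter
            fun p : ZMod n × ZMod n => ¬ addOrderOf p.1 = addOrderOf p.2).card := rfl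
    rw [this]
    omega
  omega
end

section
/- For every composite integer n (that is, n > 1 and n not prime), the girth of the independent graph I_G(Z_n) equals 3; that is, I_G(Z_n) contains a triangle and 3 is the length of its shortest cycle. -/
open SimpleGraph

/-- For composite n the girth of the independent graph is 3. -/
theorem stmt_11 (n : ℕ) (hn : 1 < n) (hn' : ¬ n.Prime) :
    (indepGraph n).egirth = 3 := by
  refine le_antisymm ?_ three_le_egirth
  obtain ⟨d, hd, hd2, hdn⟩ := Nat.exists_dvd_of_not_prime2 hn hn'
  have hn0 : n ≠ 0 := by omega
  -- three vertices with distinct orders: 0, 1, (n/d)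
  set c : ZMod n := ((n / d : ℕ) : ZMod n) with hc
  have h0 : addOrderOf (0 : ZMod n) = 1 := by simp
  have h1 : addOrderOf (1 : ZMod n) = n := ZMod.addOrderOf_one n
  have hcd : addOrderOf c = d := by
    rw [hc, ZMod.addOrderOf_coe _ hn0, Nat.gcd_eq_right (Nat.div_dvd_of_dvd hd),
      Nat.div_div_self hd hn0]
  have hab : (indepGraph n).Adj 0 1 := by
    show addOrderOf (0 : ZMod n) ≠ addOrderOf (1 : ZMod n); omega
  have hbc : (indepGraph n).Adj 1 c := by
    show addOrderOf (1 : ZMod n) ≠ addOrderOf c; omega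
  have hca : (indepGraph n).Adj c 0 := by
    show addOrderOf c ≠ addOrderOf (0 : ZMod n); omega
  let w : (indepGraph n).Walk 0 0 :=
    Walk.cons hab (Walk.cons hbc (Walk.cons hca Walk.nil))
  have hc0 : c ≠ 0 := fun h => by rw [h] at hcd; omega
  have h01 : (0 : ZMod n) ≠ 1 := hab.ne
  have h1c : (1 : ZMod n) ≠ c := hbc.ne
  have hw : w.IsCycle := by
    rw [Walk.isCycle_def]
    refine ⟨⟨?_⟩, ?_, ?_⟩
    · simp only [w, Walk.edges_cons, Walk.edges_nil]
      simp [Sym2.eq_iff, h01, h1c, hc0, h01.symm, h1c.symm, hc0.symm]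
    · simp [w]
    · simp only [w, Walk.support_cons, Walk.support_nil, List.tail_cons]
      simp [h1c, hc0, h01.symm, fun h : (1:ZMod n) = 0 => h01 h.symm]
  have hle : (indepGraph n).egirth ≤ w.length := by
    exact iInf_le_of_le 0 (iInf_le_of_le w (iInf_le_of_le hw le_rfl))
  calc (indepGraph n).egirth ≤ w.length := hle
    _ = 3 := by simp [w]
end

section
/- For every even integer n ≥ 4, the independent graph I_G(Z_n) is Hamiltonian; in fact 0 − 1 − 2 − ⋯ − (n−1) − 0 is a Hamiltonian cycle, since consecutive residues modulo n have distinct additive orders when n is even. -/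
open SimpleGraph

section aux

variable {n : ℕ} [NeZero n] (G : SimpleGraph (ZMod n)) (hadj : ∀ a : ZMod n, G.Adj a (a + 1))

/-- Walk k, k-1, ..., 1, 0. -/
def consecWalk : (k : ℕ) → G.Walk (k : ZMod n) 0
  | 0 => Walk.nil.copy (by simp) rfl
  | k + 1 => Walk.cons (by
      have h := (hadj (k : ZMod n)).symm
      have : ((k : ZMod n) + 1) = ((k + 1 : ℕ) : ZMod n) := by push_cast; ring
      rwa [this] at h) (consecWalk k)

lemma consecWalk_support (k : ℕ) :
    (consecWalk G hadj k).support = ((List.range (k + 1)).map (Nat.cast : ℕ → ZMod n)).reverse := by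
  induction k with
  | zero => simp [consecWalk, List.range_succ]
  | succ k ih =>
    rw [consecWalk, Walk.support_cons, ih]
    simp [List.range_succ]

set_option linter.unusedSectionVars false in
lemma consecWalk_edges (k : ℕ) :
    (consecWalk G hadj k).edges =
      (List.range k).reverse.map (fun j => s(((j + 1 : ℕ) : ZMod n), (j : ZMod n))) := by
  induction k with
  | zero => simp [consecWalk]
  | succ k ih =>
    rw [consecWalk, Walk.edges_cons, ih]
    simp [List.range_succ]

end aux

lemma castinj {n : ℕ} [NeZero n] {i j : ℕ} (hi : i < n) (hj : j < n)
    (h : (i : ZMod n) = (j : ZMod n)) : i = j := by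
  rw [← ZMod.val_cast_of_lt hi, ← ZMod.val_cast_of_lt hj, h]

lemma adj_consec (n : ℕ) [NeZero n] (hn : 4 ≤ n) (he : Even n) (a : ZMod n) :
    (indepGraph n).Adj a (a + 1) := by
  intro h
  set m := n / 2 with hm
  have hn0 : n ≠ 0 := NeZero.ne n
  have hmn : m < n := Nat.div_lt_self (by omega) one_lt_two
  have hm0 : m ≠ 0 := by omega
  have hmm : m + m = n := by
    obtain ⟨k, hk⟩ := he; omega
  have hc0 : ((m : ℕ) : ZMod n) ≠ 0 := by
    rw [Ne, ZMod.natCast_eq_zero_iff]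
    intro hd
    exact absurd (Nat.le_of_dvd (by omega) hd) (by omega)
  have h2c : ((m : ℕ) : ZMod n) + ((m : ℕ) : ZMod n) = 0 := by
    rw [← Nat.cast_add, hmm, ZMod.natCast_self]
  have hiff : m • a = 0 ↔ m • (a + 1) = 0 := by
    rw [← addOrderOf_dvd_iff_nsmul_eq_zero, ← addOrderOf_dvd_iff_nsmul_eq_zero, h]
  have hsa : m • (a + 1) = m • a + ((m : ℕ) : ZMod n) := by
    rw [smul_add]
    congr 1
    simp [nsmul_eq_mul]
  have key : m • a = ((m * a.val : ℕ) : ZMod n) := by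
    rw [nsmul_eq_mul, Nat.cast_mul, ZMod.natCast_val, ZMod.cast_id]
  have hmem : m • a = 0 ∨ m • a = ((m : ℕ) : ZMod n) := by
    rcases Nat.even_or_odd a.val with ⟨t, ht⟩ | ⟨t, ht⟩
    · left
      have h3 : m * (t + t) = n * t := by rw [← hmm]; ring
      rw [key, ht, h3, Nat.cast_mul, ZMod.natCast_self, zero_mul]
    · right
      have h3 : m * (2 * t + 1) = n * t + m := by rw [← hmm]; ring
      rw [key, ht, h3, Nat.cast_add, Nat.cast_mul, ZMod.natCast_self, zero_mul, zero_add]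
  rcases hmem with hu | hu
  · have := hiff.mp hu
    rw [hsa, hu, zero_add] at this
    exact hc0 this
  · have hz : m • (a + 1) = 0 := by rw [hsa, hu, h2c]
    have := hiff.mpr hz
    rw [hu] at this
    exact hc0 this

/-- For even n ≥ 4, the independent graph is Hamiltonian. -/
theorem stmt_14 (n : ℕ) [NeZero n] (hn : 4 ≤ n) (he : Even n) :
    (indepGraph n).IsHamiltonian := by
  intro _hcard
  have hn0 : n ≠ 0 := NeZero.ne n
  set G := indepGraph n with hG
  have hadj : ∀ a : ZMod n, G.Adj a (a + 1) := adj_consec n hn he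
  have hcons : ((n - 1 : ℕ) : ZMod n) + 1 = 0 := by
    have h1 : ((n - 1 : ℕ) : ZMod n) + 1 = ((n - 1 + 1 : ℕ) : ZMod n) := by push_cast; ring
    rw [h1, Nat.sub_add_cancel (by omega), ZMod.natCast_self]
  have h0 : G.Adj 0 ((n - 1 : ℕ) : ZMod n) := by
    have h2 := hadj ((n - 1 : ℕ) : ZMod n)
    rw [hcons] at h2
    exact h2.symm
  have hnodup : (((List.range (n - 1 + 1)).map (Nat.cast : ℕ → ZMod n)).reverse).Nodup := by
    rw [List.nodup_reverse]
    refine List.Nodup.map_on ?_ List.nodup_range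
    intro i hi j hj hij
    exact castinj (by have := List.mem_range.mp hi; omega)
      (by have := List.mem_range.mp hj; omega) hij
  refine ⟨0, Walk.cons h0 (consecWalk G hadj (n - 1)), ?_⟩
  rw [Walk.isHamiltonianCycle_iff_isCycle_and_support_count_tail_eq_one]
  constructor
  · rw [Walk.cons_isCycle_iff]
    refine ⟨?_, ?_⟩
    · rw [Walk.isPath_def, consecWalk_support]
      exact hnodup
    · rw [consecWalk_edges]
      simp only [List.mem_map, List.mem_reverse, List.mem_range, not_exists]
      rintro j ⟨hj, hje⟩
      rcases Sym2.eq_iff.mp hje with ⟨h1, h2⟩ | ⟨h1, h2⟩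
      · have : j + 1 = 0 :=
          castinj (n := n) (i := j + 1) (j := 0) (by omega) (by omega)
            (by rw [Nat.cast_zero]; exact h1)
        omega
      · have hj0 : j = 0 :=
          castinj (n := n) (i := j) (j := 0) (by omega) (by omega)
            (by rw [Nat.cast_zero]; exact h2)
        have : j + 1 = n - 1 := castinj (n := n) (by omega) (by omega) h1
        omega
  · intro a
    rw [Walk.support_cons, List.tail_cons, consecWalk_support]
    refine List.count_eq_one_of_mem hnodup ?_
    rw [List.mem_reverse, List.mem_map]
    refine ⟨a.val, List.mem_range.mpr ?_, ?_⟩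
    · have := ZMod.val_lt a
      omega
    · rw [ZMod.natCast_val, ZMod.cast_id]
end
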